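/- Let V be a finite nonempty set, let P ∈ ℝ^{V×V} be row-stochastic, and let α ∈ (0,1). Then the matrix I − (1−α)P is invertible, its inverse equals the convergent series Σ_{i=0}^∞ (1−α)^i P^i, and for every probability row vector σ on V the row vector π_σ := α σ (I − (1−α)P)^{-1} = α σ Σ_{i=0}^∞ (1−α)^i P^i is the unique row vector x with Σ_{v∈V} x(v) = 1 satisfying the global balance equation x = x((1−α)P + α 1 σ), where 1 is the all-ones column vector. -/

import Mathlib

open scoped BigOperators
open Matrix

/-- The Neumann series `∑ (1-α)^i P^i` defining personalized PageRank. -/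
noncomputable def pprSeries {V : Type*} [Fintype V] [DecidableEq V]
    (P : Matrix V V ℝ) (α : ℝ) : Matrix V V ℝ :=
  ∑' i : ℕ, (1 - α) ^ i • P ^ i

/-- Personalized PageRank row vector with jump distribution `σ`:
`π_σ = α σ ∑ (1-α)^i P^i`. -/
noncomputable def ppr {V : Type*} [Fintype V] [DecidableEq V]
    (P : Matrix V V ℝ) (α : ℝ) (σ : V → ℝ) : V → ℝ :=
  Matrix.vecMul (α • σ) (pprSeries P α)

section aux

attribute [local instance] Matrix.linftyOpNormedRing Matrix.linftyOpNormedAddCommGroup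
  Matrix.linftyOpNormedSpace

variable {V : Type*} [Fintype V] [DecidableEq V] [Nonempty V]

/-- Total mass is preserved by right multiplication by a row-stochastic matrix. -/
lemma sum_vecMul_stoch (P : Matrix V V ℝ) (hP1 : ∀ u, ∑ v, P u v = 1) (x : V → ℝ) :
    ∑ v, Matrix.vecMul x P v = ∑ v, x v := by
  simp only [Matrix.vecMul, dotProduct]
  rw [Finset.sum_comm]
  simp [← Finset.mul_sum, hP1]

lemma norm_lt_one (P : Matrix V V ℝ) (hP0 : ∀ u v, 0 ≤ P u v) (hP1 : ∀ u, ∑ v, P u v = 1)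
    {α : ℝ} (hα0 : 0 < α) (hα1 : α < 1) : ‖(1 - α) • P‖ < 1 := by
  have hPn : ‖P‖ ≤ 1 := by
    rw [Matrix.linfty_opNorm_def]
    have h : ((Finset.univ : Finset V).sup fun u => ∑ v, ‖P u v‖₊) ≤ 1 := by
      refine Finset.sup_le fun u _ => le_of_eq ?_
      rw [← NNReal.coe_inj]
      push_cast
      rw [← hP1 u]
      exact Finset.sum_congr rfl fun v _ => by
        rw [Real.norm_eq_abs, abs_of_nonneg (hP0 u v)]
    exact_mod_cast h
  calc ‖(1 - α) • P‖ = ‖(1 - α)‖ * ‖P‖ := norm_smul _ _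
    _ ≤ ‖(1 - α)‖ * 1 := by gcongr
    _ < 1 := by rw [mul_one, Real.norm_eq_abs, abs_of_pos (by linarith)]; linarith

lemma key (P : Matrix V V ℝ) (hP0 : ∀ u v, 0 ≤ P u v) (hP1 : ∀ u, ∑ v, P u v = 1)
    {α : ℝ} (hα0 : 0 < α) (hα1 : α < 1) :
    Summable (fun i : ℕ => (1 - α) ^ i • P ^ i) ∧
    (1 - (1 - α) • P) * pprSeries P α = 1 ∧
    pprSeries P α * (1 - (1 - α) • P) = 1 := by
  have hlt := norm_lt_one P hP0 hP1 hα0 hα1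
  have hpow : (fun i : ℕ => (1 - α) ^ i • P ^ i) = fun i : ℕ => ((1 - α) • P) ^ i := by
    funext i; rw [smul_pow]
  have hser : pprSeries P α = ∑' i : ℕ, ((1 - α) • P) ^ i := by
    rw [pprSeries]; exact congrArg (fun f : ℕ → Matrix V V ℝ => ∑' i : ℕ, f i) hpow
  refine ⟨?_, ?_, ?_⟩
  · rw [hpow]; exact summable_geometric_of_norm_lt_one hlt
  · rw [hser]; exact mul_neg_geom_series _ hlt
  · rw [hser]; exact geom_series_mul_neg _ hlt

end aux

theorem stmt0 {V : Type*} [Fintype V] [DecidableEq V] [Nonempty V]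
    (P : Matrix V V ℝ) (hP0 : ∀ u v, 0 ≤ P u v) (hP1 : ∀ u, ∑ v, P u v = 1)
    (α : ℝ) (hα0 : 0 < α) (hα1 : α < 1) :
    -- the series converges
    Summable (fun i : ℕ => (1 - α) ^ i • P ^ i) ∧
    -- `I - (1-α) P` is invertible and its inverse equals the series
    IsUnit (1 - (1 - α) • P) ∧
    (1 - (1 - α) • P)⁻¹ = pprSeries P α ∧
    -- for every probability row vector σ, π_σ = α σ (I - (1-α)P)⁻¹ = α σ ∑ (1-α)^i P^i
    ∀ σ : V → ℝ, (∀ v, 0 ≤ σ v) → ∑ v, σ v = 1 →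
      Matrix.vecMul (α • σ) ((1 - (1 - α) • P)⁻¹) = ppr P α σ ∧
      -- π_σ is the unique row vector summing to 1 satisfying global balance
      ∀ x : V → ℝ,
        ((∑ v, x v = 1) ∧
          x = Matrix.vecMul x ((1 - α) • P + α • Matrix.of (fun _ v => σ v)))
        ↔ x = ppr P α σ := by
  obtain ⟨hsum, hmul, hmul'⟩ := key P hP0 hP1 hα0 hα1
  have hinv : (1 - (1 - α) • P)⁻¹ = pprSeries P α := Matrix.inv_eq_right_inv hmul
  refine ⟨hsum, (Units.mk (1 - (1 - α) • P) (pprSeries P α) hmul hmul').isUnit, hinv, fun σ hσ0 hσ1 => ⟨by rw [hinv]; rfl, ?_⟩⟩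
  -- `vecMul x (1 - (1 - α) • P)` expands
  have hsmul : ∀ x : V → ℝ, Matrix.vecMul x ((1 - α) • P) = (1 - α) • Matrix.vecMul x P := by
    intro x; funext v
    simp only [Matrix.vecMul, dotProduct, Matrix.smul_apply, Pi.smul_apply, smul_eq_mul]
    rw [Finset.mul_sum]
    exact Finset.sum_congr rfl fun u _ => by ring
  have hexp : ∀ x : V → ℝ, Matrix.vecMul x (1 - (1 - α) • P) = x - (1 - α) • Matrix.vecMul x P := by
    intro x
    rw [Matrix.vecMul_sub, Matrix.vecMul_one, hsmul]
  -- π satisfies `vecMul π (1 - (1 - α) • P) = α • σ`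
  have hπ : Matrix.vecMul (ppr P α σ) (1 - (1 - α) • P) = α • σ := by
    rw [ppr, Matrix.vecMul_vecMul, hmul', Matrix.vecMul_one]
  -- sum of π is 1
  have hsumπ : ∑ v, ppr P α σ v = 1 := by
    have h1 : ∑ v, Matrix.vecMul (ppr P α σ) (1 - (1 - α) • P) v = ∑ v, (α • σ) v := by rw [hπ]
    rw [hexp] at h1
    have h2 : ∑ v, Matrix.vecMul (ppr P α σ) P v = ∑ v, ppr P α σ v :=
      sum_vecMul_stoch P hP1 _
    simp only [Pi.sub_apply, Pi.smul_apply, smul_eq_mul, Finset.sum_sub_distrib,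
      ← Finset.mul_sum] at h1
    rw [h2] at h1
    rw [hσ1, mul_one] at h1
    have h3 : α * (∑ v, ppr P α σ v) = α * 1 := by linear_combination h1
    exact mul_left_cancel₀ (ne_of_gt hα0) h3
  -- balance equation rewriting: for x with ∑ x = 1
  have hbal : ∀ x : V → ℝ, ∑ v, x v = 1 →
      (x = Matrix.vecMul x ((1 - α) • P + α • Matrix.of (fun _ v => σ v))
        ↔ Matrix.vecMul x (1 - (1 - α) • P) = α • σ) := by
    intro x hx
    have hjump : Matrix.vecMul x (α • Matrix.of (fun _ v => σ v)) = α • σ := by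
      funext v
      simp only [Matrix.vecMul, dotProduct, Matrix.smul_apply, Matrix.of_apply,
        Pi.smul_apply, smul_eq_mul]
      rw [show ∑ u, x u * (α * σ v) = (∑ u, x u) * (α * σ v) by rw [Finset.sum_mul]]
      rw [hx]; ring
    rw [Matrix.vecMul_add, hjump, hsmul, hexp]
    exact ⟨fun h => sub_eq_of_eq_add' h, fun h => eq_add_of_sub_eq' h⟩
  intro x
  constructor
  · rintro ⟨hx1, hx2⟩
    have h := (hbal x hx1).mp hx2
    -- multiply on the right by the inverse
    have : Matrix.vecMul (Matrix.vecMul x (1 - (1 - α) • P)) (pprSeries P α)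
        = Matrix.vecMul (α • σ) (pprSeries P α) := by rw [h]
    rwa [Matrix.vecMul_vecMul, hmul, Matrix.vecMul_one] at this
  · rintro rfl
    exact ⟨hsumπ, (hbal _ hsumπ).mpr hπ⟩
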